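/- Let A ∈ ℝ^{m×n} with rows a_i, p ∈ ℝ^m, u ∈ ℝ^n, λ > 0, α ∈ ℝ, and fix a row index i ∈ {1,…,m}. Form the augmented matrix Ã = [I_m √(2λ)A] with rows ã_i and right-hand side p̃ = √(2λ)(p − Au). Then the ART (Kaczmarz) update applied to (Ã, p̃) at x̃ = (y, z), namely x̃⁺ = x̃ + α ((p̃_i − ã_iᵀx̃)/‖ã_i‖₂²) ã_i, expressed in the variables y and x = z + u, equals: y_i⁺ = y_i + α (√(2λ)p_i − √(2λ)(Ax)_i − y_i)/(2λΣ_k a_{ik}² + 1) (with all other components of y unchanged), and x_j⁺ = x_j + α ((√(2λ)p_i − √(2λ)(Ax)_i − y_i)/(2λΣ_k a_{ik}² + 1)) √(2λ)a_{ij} for j = 1,…,n. -/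
import Mathlib


open Finset

/-- The augmented matrix `Ã = [I_m  √(2λ)A] ∈ ℝ^{m×(m+n)}`. -/
noncomputable def artAugMatrix {m n : ℕ} (A : Matrix (Fin m) (Fin n) ℝ) (lam : ℝ) :
    Matrix (Fin m) (Fin m ⊕ Fin n) ℝ :=
  fun i => Sum.elim (fun k => if i = k then (1 : ℝ) else 0)
    (fun j => Real.sqrt (2 * lam) * A i j)

/-- The augmented right-hand side `p̃ = √(2λ)(p − Au)`. -/
noncomputable def artAugRhs {m n : ℕ} (A : Matrix (Fin m) (Fin n) ℝ)
    (p : Fin m → ℝ) (u : Fin n → ℝ) (lam : ℝ) : Fin m → ℝ :=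
  fun i => Real.sqrt (2 * lam) * (p i - A.mulVec u i)

/-- One ART (Kaczmarz) update for row `i` with relaxation `α` applied to the system `(B, q)`:
`x⁺ = x + α ((q_i − b_iᵀx)/‖b_i‖₂²) b_i`. -/
noncomputable def artStep {m : ℕ} {ι : Type*} [Fintype ι]
    (B : Matrix (Fin m) ι ℝ) (q : Fin m → ℝ) (i : Fin m) (α : ℝ)
    (x : ι → ℝ) : ι → ℝ :=
  fun j => x j + α * ((q i - ∑ k, B i k * x k) / (∑ k, (B i k) ^ 2)) * B i j

lemma art_aux (m n : ℕ) (A : Matrix (Fin m) (Fin n) ℝ) (p : Fin m → ℝ) (u : Fin n → ℝ)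
    (lam : ℝ) (hlam : 0 < lam) (i : Fin m) (y : Fin m → ℝ) (x : Fin n → ℝ) :
    (artAugRhs A p u lam i
        - ∑ k, artAugMatrix A lam i k * Sum.elim y (fun j => x j - u j) k =
      Real.sqrt (2 * lam) * p i - Real.sqrt (2 * lam) * A.mulVec x i - y i) ∧
    (∑ k, (artAugMatrix A lam i k) ^ 2 = 2 * lam * (∑ k, (A i k) ^ 2) + 1) := by
  have hs : Real.sqrt (2 * lam) * Real.sqrt (2 * lam) = 2 * lam :=
    Real.mul_self_sqrt (by linarith)
  constructor
  · simp only [artAugRhs, artAugMatrix, Fintype.sum_sum_type, Sum.elim_inl, Sum.elim_inr,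
      Matrix.mulVec, dotProduct, ite_mul, one_mul, zero_mul,
      Finset.sum_ite_eq, Finset.mem_univ, if_true]
    rw [show (∑ j, Real.sqrt (2 * lam) * A i j * (x j - u j)) =
        Real.sqrt (2 * lam) * ∑ j, A i j * x j
        - Real.sqrt (2 * lam) * ∑ j, A i j * u j by
      rw [Finset.mul_sum, Finset.mul_sum, ← Finset.sum_sub_distrib]
      congr 1; ext j; ring]
    ring
  · simp only [artAugMatrix, Fintype.sum_sum_type, Sum.elim_inl, Sum.elim_inr,
      mul_pow, apply_ite (· ^ 2), one_pow]
    rw [show ((0:ℝ) ^ 2) = 0 by norm_num]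
    rw [Finset.sum_ite_eq, ← Finset.mul_sum, Real.sq_sqrt (by linarith : (0:ℝ) ≤ 2 * lam)]
    simp [add_comm]

/-- The ART (Kaczmarz) update for row `i` applied to the augmented system
`[I √(2λ)A]·(y, z) = √(2λ)(p − Au)` at `x̃ = (y, z)` with `z = x − u`, expressed in the
variables `y` and `x = z + u`, gives the stated ART proximal update formulas. -/
theorem art_prox_update
    (m n : ℕ) (A : Matrix (Fin m) (Fin n) ℝ) (p : Fin m → ℝ) (u : Fin n → ℝ)
    (lam α : ℝ) (hlam : 0 < lam) (i : Fin m)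
    (y : Fin m → ℝ) (x : Fin n → ℝ) :
    (artStep (artAugMatrix A lam) (artAugRhs A p u lam) i α
        (Sum.elim y (fun j => x j - u j)) (Sum.inl i) =
      y i + α * (Real.sqrt (2 * lam) * p i - Real.sqrt (2 * lam) * A.mulVec x i - y i) /
        (2 * lam * (∑ k, (A i k) ^ 2) + 1)) ∧
    (∀ i' : Fin m, i' ≠ i →
        artStep (artAugMatrix A lam) (artAugRhs A p u lam) i α
            (Sum.elim y (fun j => x j - u j)) (Sum.inl i') = y i') ∧
    (∀ j : Fin n,
        artStep (artAugMatrix A lam) (artAugRhs A p u lam) i α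
            (Sum.elim y (fun j => x j - u j)) (Sum.inr j) + u j =
          x j + α * ((Real.sqrt (2 * lam) * p i - Real.sqrt (2 * lam) * A.mulVec x i - y i) /
              (2 * lam * (∑ k, (A i k) ^ 2) + 1)) * (Real.sqrt (2 * lam) * A i j)) := by
  obtain ⟨h1, h2⟩ := art_aux m n A p u lam hlam i y x
  refine ⟨?_, ?_, ?_⟩
  · simp only [artStep, h1, h2, Sum.elim_inl]
    rw [show artAugMatrix A lam i (Sum.inl i) = 1 by simp [artAugMatrix]]
    ring
  · intro i' hi'
    simp only [artStep, Sum.elim_inl]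
    rw [show artAugMatrix A lam i (Sum.inl i') = 0 by
      simp [artAugMatrix, (Ne.symm hi' : i ≠ i')]]
    ring
  · intro j
    simp only [artStep, h1, h2, Sum.elim_inr]
    rw [show artAugMatrix A lam i (Sum.inr j) = Real.sqrt (2 * lam) * A i j by
      simp [artAugMatrix]]
    ring
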